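/- Let g ≥ 2 and let Γ be a stable vine graph of genus g with weights g₁, g₂ and δ edges. Then Γ is d-special if and only if m₁ := d·(2g₁−2+δ)/(2g−2) − δ/2 is an integer, equivalently if and only if (2g−2) divides d·(2g₁−2+δ) − (g−1)·δ. -/

import Mathlib

open Finset

noncomputable section
open scoped Classical

variable {V : Type} [Fintype V] [DecidableEq V]

/-- The simple graph underlying a multigraph with multiplicity function `k`:
`u` and `v` are adjacent iff `u ≠ v` and some edge joins them. -/
def graphOf (k : V → V → ℕ) : SimpleGraph V where
  Adj u v := u ≠ v ∧ (0 < k u v ∨ 0 < k v u)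
  symm := ⟨fun u v h => ⟨h.1.symm, h.2.symm⟩⟩
  loopless := ⟨fun v h => h.1 rfl⟩

/-- The number of edges of a multigraph: loops plus half the ordered count. -/
def numEdges (k : V → V → ℕ) : ℕ :=
  (∑ v, k v v) + (∑ u, ∑ v ∈ Finset.univ.erase u, k u v) / 2

/-- The genus of a weighted graph: `∑ w(v) + b₁`, with `b₁ = #E - #V + 1`. -/
def genus (k : V → V → ℕ) (w : V → ℕ) : ℤ :=
  (∑ v, (w v : ℤ)) + ((numEdges k : ℤ) - (Fintype.card V : ℤ) + 1)

/-- Stability: connected, and each weight-zero vertex has valency at least 3. -/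
def IsStable (k : V → V → ℕ) (w : V → ℕ) : Prop :=
  (graphOf k).Connected ∧
    ∀ v, w v = 0 → 3 ≤ 2 * k v v + ∑ u ∈ Finset.univ.erase v, k u v

/-- `δ_A`: the number of edges joining `A` to its complement. -/
def deltaA (k : V → V → ℕ) (A : Finset V) : ℤ :=
  ∑ u ∈ A, ∑ v ∈ Aᶜ, (k u v : ℤ)

/-- `w_A = Σ_{v∈A} (2w(v) − 2 + 2k(v,v) + Σ_{u≠v} k(u,v))`. -/
def wA (k : V → V → ℕ) (w : V → ℕ) (A : Finset V) : ℤ :=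
  ∑ v ∈ A, (2 * (w v : ℤ) - 2 + 2 * (k v v : ℤ) + ∑ u ∈ Finset.univ.erase v, (k u v : ℤ))

/-- `d_A`: the total degree of a multidegree on the subset `A`. -/
def degA (d : V → ℤ) (A : Finset V) : ℤ := ∑ v ∈ A, d v

/-- `m_A(d) = d·w_A/(2g−2) − δ_A/2 ∈ ℚ`. -/
def mA (k : V → V → ℕ) (w : V → ℕ) (D : ℤ) (A : Finset V) : ℚ :=
  (D : ℚ) * (wA k w A : ℚ) / ((2 * genus k w - 2 : ℤ) : ℚ) - (deltaA k A : ℚ) / 2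

/-- A balanced multidegree of total degree `D`. -/
def IsBalanced (k : V → V → ℕ) (w : V → ℕ) (D : ℤ) (d : V → ℤ) : Prop :=
  degA d Finset.univ = D ∧ ∀ A : Finset V, mA k w D A ≤ (degA d A : ℚ)

/-- A strictly balanced multidegree of total degree `D`. -/
def IsStrictlyBalanced (k : V → V → ℕ) (w : V → ℕ) (D : ℤ) (d : V → ℤ) : Prop :=
  IsBalanced k w D d ∧
    ∀ A : Finset V, A ≠ ∅ → A ≠ Finset.univ → mA k w D A < (degA d A : ℚ)

/-- `(Γ,w)` is `d`-general if every balanced multidegree of total degree `d`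
is strictly balanced. -/
def IsDGeneral (k : V → V → ℕ) (w : V → ℕ) (D : ℤ) : Prop :=
  ∀ d : V → ℤ, IsBalanced k w D d → IsStrictlyBalanced k w D d

/-- The generator `c_v` of the lattice `Λ`. -/
def cvec (k : V → V → ℕ) (v : V) : V → ℤ := fun u =>
  if u = v then -(∑ x ∈ Finset.univ.erase v, (k x v : ℤ)) else (k u v : ℤ)

/-- The lattice `Λ ⊆ ℤ^V` generated by the `c_v`. -/
def Lambda (k : V → V → ℕ) : AddSubgroup (V → ℤ) :=
  AddSubgroup.closure (Set.range (cvec k))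

/-- The total-degree homomorphism `ℤ^V → ℤ`. -/
def sumHom (V : Type) [Fintype V] : (V → ℤ) →+ ℤ :=
  { toFun := fun d => ∑ v, d v
    map_zero' := by simp
    map_add' := fun a b => by simp [Finset.sum_add_distrib] }

/-- `Z = {d ∈ ℤ^V : Σ_v d(v) = 0}`. -/
def Zsub (V : Type) [Fintype V] : AddSubgroup (V → ℤ) := (sumHom V).ker

/-- Remove the edge(s) joining `a` and `b` from the multigraph. -/
def removeEdge (k : V → V → ℕ) (a b : V) : V → V → ℕ := fun u v =>
  if (u = a ∧ v = b) ∨ (u = b ∧ v = a) then 0 else k u v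

/-- `a`–`b` is a bridge: a single non-loop edge whose removal disconnects the graph. -/
def IsBridge (k : V → V → ℕ) (a b : V) : Prop :=
  a ≠ b ∧ k a b = 1 ∧ ¬ (graphOf (removeEdge k a b)).Connected

/-- `A` induces a connected sub-multigraph. -/
def IsConnectedSubset (k : V → V → ℕ) (A : Finset V) : Prop :=
  ((graphOf k).induce (A : Set V)).Connected

/-- The equivalence relation `≈` on `V` generated by bridges. -/
def contractSetoid (k : V → V → ℕ) : Setoid V :=
  ⟨Relation.EqvGen (fun u v => IsBridge k u v), Relation.EqvGen.is_equivalence _⟩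

/-- The vertex set `V² = V/≈` of the contracted graph `Γ²`. -/
def V2 (k : V → V → ℕ) : Type := Quotient (contractSetoid k)

instance (k : V → V → ℕ) : Finite (V2 k) := Quotient.finite _

instance (k : V → V → ℕ) : Fintype (V2 k) := Fintype.ofFinite _

/-- The fiber of the quotient map `φ : V → V²` over a class `c`. -/
def fiber (k : V → V → ℕ) (c : V2 k) : Finset V :=
  Finset.univ.filter (fun v => Quotient.mk (contractSetoid k) v = c)

/-- The multiplicity function `k²` of the contracted graph `Γ²`. -/
def k2 (k : V → V → ℕ) : V2 k → V2 k → ℕ := fun c c' =>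
  if c = c' then
    (∑ v ∈ fiber k c, k v v) +
      (∑ u ∈ fiber k c, ∑ v ∈ (fiber k c).erase u,
        if IsBridge k u v then 0 else k u v) / 2
  else ∑ u ∈ fiber k c, ∑ v ∈ fiber k c', k u v

/-- The weight function `w²` of the contracted weighted graph `(Γ²,w²)`. -/
def w2 (k : V → V → ℕ) (w : V → ℕ) : V2 k → ℕ := fun c => ∑ v ∈ fiber k c, w v

/-- The pushforward `α(d)` of a multidegree to the contracted graph. -/
def alphaMap (k : V → V → ℕ) (d : V → ℤ) : V2 k → ℤ := fun c => ∑ v ∈ fiber k c, d v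

/-- The setoid on multidegrees of total degree `D`: two are equivalent if their
difference lies in `Λ`; the quotient is `Δ^d`. -/
def degSetoid (k : V → V → ℕ) (D : ℤ) : Setoid {d : V → ℤ // (∑ v, d v) = D} :=
  ⟨fun a b => (a : V → ℤ) - (b : V → ℤ) ∈ Lambda k, by
    constructor
    · intro a; simpa using (Lambda k).zero_mem
    · intro a b h; have h2 := (Lambda k).neg_mem h; rwa [neg_sub] at h2
    · intro a b c h1 h2
      have h3 := (Lambda k).add_mem h1 h2
      rwa [sub_add_sub_cancel] at h3⟩

/-- Number of edges of the sub-multigraph induced on `A`. -/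
def numEdgesIn (k : V → V → ℕ) (A : Finset V) : ℕ :=
  (∑ v ∈ A, k v v) + (∑ u ∈ A, ∑ v ∈ A.erase u, k u v) / 2

/-- Blow-up of a multigraph at the single bridge `a`–`b`: one exceptional
vertex is inserted in the middle of the bridge. -/
def blowK (k : V → V → ℕ) (a b : V) : (V ⊕ Unit) → (V ⊕ Unit) → ℕ
  | Sum.inl u, Sum.inl v => if (u = a ∧ v = b) ∨ (u = b ∧ v = a) then 0 else k u v
  | Sum.inl u, Sum.inr _ => if u = a ∨ u = b then 1 else 0
  | Sum.inr _, Sum.inl v => if v = a ∨ v = b then 1 else 0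
  | Sum.inr _, Sum.inr _ => 0

/-- Weight function of the blow-up at one bridge: exceptional vertex has weight 0. -/
def blowW (w : V → ℕ) : V ⊕ Unit → ℕ
  | Sum.inl v => w v
  | Sum.inr _ => 0

/-- Blow-up of a multigraph at a set `S` of bridges (given as ordered pairs):
one exceptional vertex is inserted in the middle of each bridge of `S`. -/
def blowKS (k : V → V → ℕ) (S : Finset (V × V)) :
    (V ⊕ {p : V × V // p ∈ S}) → (V ⊕ {p : V × V // p ∈ S}) → ℕ
  | Sum.inl u, Sum.inl v => if (u, v) ∈ S ∨ (v, u) ∈ S then 0 else k u v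
  | Sum.inl u, Sum.inr e => if u = e.1.1 ∨ u = e.1.2 then 1 else 0
  | Sum.inr e, Sum.inl v => if v = e.1.1 ∨ v = e.1.2 then 1 else 0
  | Sum.inr _, Sum.inr _ => 0

/-- Weight function of the blow-up at a set of bridges. -/
def blowWS (w : V → ℕ) (S : Finset (V × V)) : (V ⊕ {p : V × V // p ∈ S}) → ℕ
  | Sum.inl v => w v
  | Sum.inr _ => 0

/-- Strictly balanced multidegree of total degree `D` on the blow-up `Γ̂_S`:
balanced (with degree 1 on each exceptional vertex), and the inequality is
strict for every proper nonempty `A` such that some edge between `A` and its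
complement has no exceptional endpoint. -/
def IsStrictlyBalancedBlowS (k : V → V → ℕ) (w : V → ℕ) (S : Finset (V × V)) (D : ℤ)
    (dh : (V ⊕ {p : V × V // p ∈ S}) → ℤ) : Prop :=
  IsBalanced (blowKS k S) (blowWS w S) D dh ∧
    (∀ e : {p : V × V // p ∈ S}, dh (Sum.inr e) = 1) ∧
    ∀ A : Finset (V ⊕ {p : V × V // p ∈ S}), A ≠ ∅ → A ≠ Finset.univ →
      (∃ u v : V, Sum.inl u ∈ A ∧ Sum.inl v ∉ A ∧ 0 < blowKS k S (Sum.inl u) (Sum.inl v)) →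
      mA (blowKS k S) (blowWS w S) D A < (degA dh A : ℚ)

/-- Multiplicity function of the vine graph: two vertices joined by `δ` edges,
no loops. -/
def vineK (δ : ℕ) : Fin 2 → Fin 2 → ℕ := fun u v => if u = v then 0 else δ

/-- Weight function of the vine graph with weights `g₁, g₂`. -/
def vineW (g1 g2 : ℕ) : Fin 2 → ℕ := fun v => if v = 0 then g1 else g2

/-- The data of a stable vine graph of genus `g` with weights `g₁, g₂` and `δ` edges. -/
def StableVine (g : ℤ) (g1 g2 δ : ℕ) : Prop :=
  2 ≤ δ ∧ ((g1 = 0 ∨ g2 = 0) → 3 ≤ δ) ∧ (g1 : ℤ) + (g2 : ℤ) + (δ : ℤ) - 1 = g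


/-! ### Auxiliary lemmas for the vine graph -/

lemma fin2_subsets (A : Finset (Fin 2)) :
    A = ∅ ∨ A = {0} ∨ A = {1} ∨ A = Finset.univ := by
  revert A; decide

lemma erase0 : (Finset.univ.erase (0 : Fin 2)) = {1} := by decide
lemma erase1 : (Finset.univ.erase (1 : Fin 2)) = {0} := by decide
lemma compl0 : (({0} : Finset (Fin 2))ᶜ) = {1} := by decide
lemma compl1 : (({1} : Finset (Fin 2))ᶜ) = {0} := by decide
lemma complU : ((Finset.univ : Finset (Fin 2))ᶜ) = ∅ := by decide

lemma numEdges_vine (δ : ℕ) : numEdges (vineK δ) = δ := by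
  simp [numEdges, vineK, Fin.sum_univ_two, erase0, erase1]
  omega

lemma genus_vine (g1 g2 δ : ℕ) :
    genus (vineK δ) (vineW g1 g2) = (g1 : ℤ) + g2 + δ - 1 := by
  simp [genus, numEdges_vine, vineW, Fin.sum_univ_two]
  ring

lemma deltaA_vine0 (δ : ℕ) : deltaA (vineK δ) {0} = δ := by
  simp [deltaA, vineK, compl0]

lemma deltaA_vine1 (δ : ℕ) : deltaA (vineK δ) {1} = δ := by
  simp [deltaA, vineK, compl1]

lemma deltaA_vineE (δ : ℕ) : deltaA (vineK δ) (∅ : Finset (Fin 2)) = 0 := by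
  simp [deltaA]

lemma deltaA_vineU (δ : ℕ) : deltaA (vineK δ) (Finset.univ : Finset (Fin 2)) = 0 := by
  simp [deltaA, complU]

lemma wA_vine0 (g1 g2 δ : ℕ) :
    wA (vineK δ) (vineW g1 g2) {0} = 2 * (g1 : ℤ) - 2 + δ := by
  simp [wA, vineK, vineW, erase0]

lemma wA_vine1 (g1 g2 δ : ℕ) :
    wA (vineK δ) (vineW g1 g2) {1} = 2 * (g2 : ℤ) - 2 + δ := by
  simp [wA, vineK, vineW, erase1]

lemma wA_vineE (g1 g2 δ : ℕ) :
    wA (vineK δ) (vineW g1 g2) (∅ : Finset (Fin 2)) = 0 := by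
  simp [wA]

lemma wA_vineU (g1 g2 δ : ℕ) :
    wA (vineK δ) (vineW g1 g2) (Finset.univ : Finset (Fin 2))
      = 2 * ((g1 : ℤ) + g2 + δ - 1) - 2 := by
  simp [wA, vineK, vineW, Fin.sum_univ_two, erase0, erase1]
  ring

lemma degA_vine0 (d : Fin 2 → ℤ) : degA d {0} = d 0 := by simp [degA]
lemma degA_vine1 (d : Fin 2 → ℤ) : degA d {1} = d 1 := by simp [degA]
lemma degA_vineE (d : Fin 2 → ℤ) : degA d (∅ : Finset (Fin 2)) = 0 := by simp [degA]
lemma degA_vineU (d : Fin 2 → ℤ) :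
    degA d (Finset.univ : Finset (Fin 2)) = d 0 + d 1 := by
  simp [degA, Fin.sum_univ_two]

/-- A stable vine graph of genus `g` with weights `g₁, g₂` and
`δ` edges is `d`-special iff `m₁ = d(2g₁−2+δ)/(2g−2) − δ/2` is an integer, iff
`(2g−2) ∣ d(2g₁−2+δ) − (g−1)δ`. -/
theorem stmt19 (g d : ℤ) (hg : 2 ≤ g) (g1 g2 δ : ℕ)
    (hstable : StableVine g g1 g2 δ) :
    (¬ IsDGeneral (vineK δ) (vineW g1 g2) d ↔
      ∃ n : ℤ, (d : ℚ) * (2 * (g1 : ℚ) - 2 + (δ : ℚ)) / (2 * (g : ℚ) - 2) - (δ : ℚ) / 2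
        = (n : ℚ)) ∧
    (¬ IsDGeneral (vineK δ) (vineW g1 g2) d ↔
      (2 * g - 2) ∣ (d * (2 * (g1 : ℤ) - 2 + (δ : ℤ)) - (g - 1) * (δ : ℤ))) := by
  obtain ⟨hδ2, hδ3, hgsum⟩ := hstable
  set K := vineK δ
  set W := vineW g1 g2
  have hgen : genus K W = g := by rw [genus_vine]; exact hgsum
  have hgQ : ((2 * genus K W - 2 : ℤ) : ℚ) = 2 * (g : ℚ) - 2 := by
    rw [hgen]; push_cast; ring
  have hgne : (2 * (g : ℚ) - 2) ≠ 0 := by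
    have : (2 : ℚ) ≤ (g : ℚ) := by exact_mod_cast hg
    linarith
  have hg1 : (g : ℚ) - 1 ≠ 0 := by intro h; apply hgne; linarith
  set t : ℚ := (d : ℚ) * (2 * (g1 : ℚ) - 2 + (δ : ℚ)) / (2 * (g : ℚ) - 2) - (δ : ℚ) / 2
    with ht
  -- mA values on the four subsets
  have hm0 : mA K W d {0} = t := by
    rw [mA, deltaA_vine0, wA_vine0, hgQ, ht]; push_cast; ring
  have hm1 : mA K W d {1} = (d : ℚ) - (δ : ℚ) - t := by
    rw [mA, deltaA_vine1, wA_vine1, hgQ, ht]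
    have hsum : 2 * (g2 : ℚ) - 2 + (δ : ℚ)
        = (2 * (g : ℚ) - 2) - (2 * (g1 : ℚ) - 2 + (δ : ℚ)) := by
      have : (g1 : ℚ) + (g2 : ℚ) + (δ : ℚ) - 1 = (g : ℚ) := by exact_mod_cast hgsum
      linarith
    push_cast
    rw [hsum]
    field_simp
    ring
  have hmE : mA K W d (∅ : Finset (Fin 2)) = 0 := by
    rw [mA, deltaA_vineE, wA_vineE]; simp
  have hmU : mA K W d (Finset.univ : Finset (Fin 2)) = (d : ℚ) := by
    rw [mA, deltaA_vineU, wA_vineU, hgQ]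
    have : ((2 * ((g1 : ℤ) + g2 + δ - 1) - 2 : ℤ) : ℚ) = 2 * (g : ℚ) - 2 := by
      rw [hgsum]; push_cast; ring
    rw [this]
    field_simp
    simp
  have hδ0 : (0 : ℚ) ≤ (δ : ℚ) := by positivity
  -- main equivalence with ∃ n, t = n
  have key : ¬ IsDGeneral K W d ↔ ∃ n : ℤ, t = (n : ℚ) := by
    constructor
    · intro h
      rw [IsDGeneral] at h
      push_neg at h
      obtain ⟨d', hbal, hnsb⟩ := h
      rw [IsStrictlyBalanced] at hnsb
      push_neg at hnsb
      obtain ⟨A, hAne, hAnu, hAle⟩ := hnsb hbal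
      have hAeq : mA K W d A = (degA d' A : ℚ) :=
        le_antisymm (hbal.2 A) hAle
      rcases fin2_subsets A with rfl | rfl | rfl | rfl
      · exact absurd hAne (by simp)
      · refine ⟨d' 0, ?_⟩
        rw [← hm0, hAeq, degA_vine0]
      · refine ⟨d - δ - d' 1, ?_⟩
        rw [hm1, degA_vine1] at hAeq
        push_cast
        linarith
      · exact absurd rfl hAnu
    · rintro ⟨n, hn⟩
      intro hgen'
      set d' : Fin 2 → ℤ := fun v => if v = 0 then n else d - n with hd'
      have hd'0 : d' 0 = n := by simp [hd']
      have hd'1 : d' 1 = d - n := by simp [hd']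
      have hbal : IsBalanced K W d d' := by
        constructor
        · rw [degA, Fin.sum_univ_two, hd'0, hd'1]; ring
        · intro A
          rcases fin2_subsets A with rfl | rfl | rfl | rfl
          · rw [hmE, degA_vineE]; norm_num
          · rw [hm0, degA_vine0, hd'0, hn]
          · rw [hm1, degA_vine1, hd'1, hn]; push_cast; linarith
          · rw [hmU, degA_vineU, hd'0, hd'1]; push_cast; linarith
      have hsb := hgen' d' hbal
      have := hsb.2 {0} (by decide) (by decide)
      rw [hm0, degA_vine0, hd'0, hn] at this
      exact lt_irrefl _ this
  constructor
  · exact key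
  · rw [key]
    constructor
    · rintro ⟨n, hn⟩
      refine ⟨n, ?_⟩
      have : ((d * (2 * (g1 : ℤ) - 2 + (δ : ℤ)) - (g - 1) * (δ : ℤ) : ℤ) : ℚ)
          = (((2 * g - 2) * n : ℤ) : ℚ) := by
        push_cast
        have ht2 : (d : ℚ) * (2 * (g1 : ℚ) - 2 + (δ : ℚ)) / (2 * (g : ℚ) - 2)
            = (n : ℚ) + (δ : ℚ) / 2 := by rw [ht] at hn; linarith
        have := ht2
        field_simp at this
        linarith
      exact_mod_cast this
    · rintro ⟨n, hn⟩
      refine ⟨n, ?_⟩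
      have hQ : (d : ℚ) * (2 * (g1 : ℚ) - 2 + (δ : ℚ)) - ((g : ℚ) - 1) * (δ : ℚ)
          = (2 * (g : ℚ) - 2) * (n : ℚ) := by exact_mod_cast hn
      rw [ht]
      field_simp
      linarith
end
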